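/- Extend W_q to all of ℝ by setting W_q(z) = 0 for z < 0. Then for every x ≥ 0, λ∫₀^∞ W_q(x − αy)·μ·e^{−μy} dy = λμ(e^{Φ_q x} − e^{ρ₋ x})/(αc(Φ_q − ρ₋)). -/

import Mathlib

open MeasureTheory

lemma expint (k a b : ℝ) (hk : k ≠ 0) :
    ∫ y in a..b, Real.exp (k*y) = (Real.exp (k*b) - Real.exp (k*a))/k := by
  rw [intervalIntegral.integral_comp_mul_left (fun x => Real.exp x) hk, integral_exp]
  simp [smul_eq_mul, div_eq_inv_mul]

theorem stmt7 (c α lam q μ : ℝ)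
    (hc : 0 < c) (hα0 : 0 < α) (hα1 : α ≤ 1)
    (hlam : 0 < lam) (hq : 0 < q) (hμ : 0 < μ)
    (Δ Φ ρ : ℝ)
    (hΔ : Δ = (c*μ - α*lam - α*q)^2 + 4*α*c*μ*q)
    (hΦ : Φ = (-(c*μ - α*lam - α*q) + Real.sqrt Δ) / (2*α*c))
    (hρ : ρ = (-(c*μ - α*lam - α*q) - Real.sqrt Δ) / (2*α*c))
    (W : ℝ → ℝ)
    (hW : ∀ z, 0 ≤ z → W z = ((α*Φ + μ)*Real.exp (Φ*z) - (α*ρ + μ)*Real.exp (ρ*z))/(α*c*(Φ - ρ)))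
    (hWneg : ∀ z, z < 0 → W z = 0) :
    ∀ x : ℝ, 0 ≤ x →
      lam * (∫ y in Set.Ioi (0:ℝ), W (x - α*y) * μ * Real.exp (-μ*y))
        = lam * μ * (Real.exp (Φ*x) - Real.exp (ρ*x))/(α*c*(Φ - ρ)) := by
  intro x hx
  -- basic positivity facts
  have hΔpos : 0 < Δ := by
    rw [hΔ]; positivity
  have hsq : 0 < Real.sqrt Δ := Real.sqrt_pos.mpr hΔpos
  have hαc : (0:ℝ) < α * c := mul_pos hα0 hc
  have hΦρ : Φ - ρ = Real.sqrt Δ / (α * c) := by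
    rw [hΦ, hρ]; field_simp; ring
  have hΦρpos : 0 < Φ - ρ := by rw [hΦρ]; positivity
  have hD : α * c * (Φ - ρ) ≠ 0 := ne_of_gt (mul_pos hαc hΦρpos)
  have hk1 : 0 < α * Φ + μ := by
    have : α * Φ + μ = (c*μ + α*lam + α*q + Real.sqrt Δ) / (2*c) := by
      rw [hΦ]; field_simp; ring
    rw [this]; positivity
  have hsqlt : Real.sqrt Δ < c*μ + α*lam + α*q := by
    have h1 : Δ < (c*μ + α*lam + α*q)^2 := by
      rw [hΔ]; nlinarith [mul_pos (mul_pos hc hμ) (mul_pos hα0 hlam)]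
    have h2 : Real.sqrt Δ < Real.sqrt ((c*μ + α*lam + α*q)^2) :=
      Real.sqrt_lt_sqrt hΔpos.le h1
    rwa [Real.sqrt_sq (by positivity)] at h2
  have hk2 : 0 < α * ρ + μ := by
    have : α * ρ + μ = (c*μ + α*lam + α*q - Real.sqrt Δ) / (2*c) := by
      rw [hρ]; field_simp; ring
    rw [this]
    exact div_pos (by linarith) (by positivity)
  -- abbreviations
  set D := α * c * (Φ - ρ) with hDdef
  set b := x / α with hbdef
  have hb : 0 ≤ b := by positivity
  set k1 := -(α*Φ + μ) with hk1def
  set k2 := -(α*ρ + μ) with hk2def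
  have hk1ne : k1 ≠ 0 := by rw [hk1def]; exact neg_ne_zero.mpr (ne_of_gt hk1)
  have hk2ne : k2 ≠ 0 := by rw [hk2def]; exact neg_ne_zero.mpr (ne_of_gt hk2)
  set E1 := Real.exp (Φ*x) with hE1
  set E2 := Real.exp (ρ*x) with hE2
  set c1 := (α*Φ + μ) * μ * E1 / D with hc1
  set c2 := -((α*ρ + μ) * μ * E2) / D with hc2
  set g : ℝ → ℝ := fun y => c1 * Real.exp (k1*y) + c2 * Real.exp (k2*y) with hg
  -- step 1: integrand equals indicator of Iic b of g on Ioi 0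
  have step1 : ∫ y in Set.Ioi (0:ℝ), W (x - α*y) * μ * Real.exp (-μ*y)
      = ∫ y in Set.Ioi (0:ℝ), Set.indicator (Set.Iic b) g y := by
    refine setIntegral_congr_fun measurableSet_Ioi ?_
    intro y hy
    by_cases hyb : y ≤ b
    · have hz : 0 ≤ x - α*y := by
        have : α * y ≤ x := by
          rw [hbdef] at hyb
          calc α * y ≤ α * (x/α) := by nlinarith
          _ = x := by field_simp
        linarith
      have hyb' : y ∈ Set.Iic b := hyb
      simp only [Set.indicator_of_mem hyb', hg]
      rw [hW _ hz]
      have e1 : Real.exp (Φ*(x - α*y)) * Real.exp (-μ*y) = E1 * Real.exp (k1*y) := by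
        rw [hE1, ← Real.exp_add, ← Real.exp_add]
        congr 1; rw [hk1def]; ring
      have e2 : Real.exp (ρ*(x - α*y)) * Real.exp (-μ*y) = E2 * Real.exp (k2*y) := by
        rw [hE2, ← Real.exp_add, ← Real.exp_add]
        congr 1; rw [hk2def]; ring
      simp only [hc1, hc2]
      simp only [neg_mul] at e1 e2 ⊢
      linear_combination (μ * (α*Φ+μ) / D) * e1 - (μ*(α*ρ+μ) / D) * e2
    · have hz : x - α*y < 0 := by
        push_neg at hyb
        rw [hbdef] at hyb
        have : x < α * y := by
          calc x = α * (x/α) := by field_simp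
          _ < α * y := by exact (mul_lt_mul_iff_right₀ hα0).mpr hyb
        linarith
      have hyb' : y ∉ Set.Iic b := hyb
      simp only [Set.indicator_of_notMem hyb']
      rw [hWneg _ hz]
      ring
  -- step 2: indicator integral reduces to Ioc 0 b
  have step2 : ∫ y in Set.Ioi (0:ℝ), Set.indicator (Set.Iic b) g y
      = ∫ y in Set.Ioc (0:ℝ) b, g y := by
    rw [setIntegral_indicator measurableSet_Iic, Set.Ioi_inter_Iic]
  -- step 3: compute the integral
  have step3 : ∫ y in Set.Ioc (0:ℝ) b, g y
      = c1 * (Real.exp (k1*b) - 1)/k1 + c2 * (Real.exp (k2*b) - 1)/k2 := by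
    rw [← intervalIntegral.integral_of_le hb]
    have i1 : IntervalIntegrable (fun y => c1 * Real.exp (k1*y)) MeasureTheory.volume 0 b :=
      Continuous.intervalIntegrable (by fun_prop) 0 b
    have i2 : IntervalIntegrable (fun y => c2 * Real.exp (k2*y)) MeasureTheory.volume 0 b :=
      Continuous.intervalIntegrable (by fun_prop) 0 b
    have : (∫ y in (0:ℝ)..b, g y) = ∫ y in (0:ℝ)..b, (c1 * Real.exp (k1*y) + c2 * Real.exp (k2*y)) := by
      simp only [hg]
    rw [this, intervalIntegral.integral_add i1 i2,
      intervalIntegral.integral_const_mul, intervalIntegral.integral_const_mul,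
      expint k1 0 b hk1ne, expint k2 0 b hk2ne]
    simp [mul_div_assoc]
  -- exponent collapse identities
  have hE1ne : E1 ≠ 0 := Real.exp_ne_zero _
  have hE2ne : E2 ≠ 0 := Real.exp_ne_zero _
  have hek1 : Real.exp (k1*b) = Real.exp (-(μ/α)*x) / E1 := by
    rw [hE1, eq_div_iff hE1ne, ← Real.exp_add]
    congr 1
    rw [hk1def, hbdef]; field_simp; ring
  have hek2 : Real.exp (k2*b) = Real.exp (-(μ/α)*x) / E2 := by
    rw [hE2, eq_div_iff hE2ne, ← Real.exp_add]
    congr 1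
    rw [hk2def, hbdef]; field_simp; ring
  rw [step1, step2, step3, hek1, hek2]
  rw [hc1, hc2]
  have : lam * μ * (Real.exp (Φ*x) - Real.exp (ρ*x))/(α*c*(Φ - ρ)) = lam * (μ * (E1 - E2) / D) := by
    rw [hE1, hE2, hDdef]; ring
  rw [this]
  congr 1
  field_simp
  ring
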